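/- For the single-constraint-set problem of maximizing ∑_{i=1}^N r_i subject to ∑_{i=1}^j g⁻¹(r_i) ≤ ∑_{i=1}^j E_i for all j (g⁻¹ strictly convex increasing, g⁻¹(0)=0), the optimal solution is given recursively by: i_0 = 0, and on each block (i_{n-1}, i_n] the rate is constant equal to g of the average remaining energy, where i_n = argmin_{i_{n-1} < i ≤ N} g((∑_{j=1}^{i} E_j - ∑_{j=1}^{i_{n-1}} g⁻¹(r*_j))/(i - i_{n-1})). Moreover the resulting rate sequence is nondecreasing. -/

import Mathlib

open Finset

/-- Average energy on block `n`. -/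
noncomputable def blkAvg (E : ℕ → ℝ) (idx : ℕ → ℕ) (n : ℕ) : ℝ :=
  ((∑ j ∈ range (idx (n + 1)), E j) - ∑ j ∈ range (idx n), E j) /
    ((idx (n + 1) : ℝ) - (idx n : ℝ))

lemma blkAvg_mul (E : ℕ → ℝ) (idx : ℕ → ℕ) (n : ℕ) (hlt : idx n < idx (n + 1)) :
    ((idx (n + 1) : ℝ) - (idx n : ℝ)) * blkAvg E idx n
      = (∑ j ∈ range (idx (n + 1)), E j) - ∑ j ∈ range (idx n), E j := by
  have h : ((idx (n + 1) : ℝ) - (idx n : ℝ)) ≠ 0 := by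
    have : (idx n : ℝ) < (idx (n + 1) : ℝ) := by exact_mod_cast hlt
    linarith
  rw [blkAvg, mul_comm, div_mul_cancel₀ _ h]

lemma log_concave_aux {a p : ℝ} (ha : 0 ≤ a) (hp : 0 ≤ p) :
    Real.log (1 + p) ≤ Real.log (1 + a) + (p - a) / (1 + a) := by
  have ha1 : (0:ℝ) < 1 + a := by linarith
  have hp1 : (0:ℝ) < 1 + p := by linarith
  have h := Real.log_le_sub_one_of_pos (div_pos hp1 ha1)
  rw [Real.log_div (ne_of_gt hp1) (ne_of_gt ha1)] at h
  have h2 : (1 + p) / (1 + a) - 1 = (p - a) / (1 + a) := by field_simp; ring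
  rw [h2] at h
  linarith

lemma g_le_g (g : ℝ → ℝ) (hg : ∀ p, g p = Real.log (1 + p) / 2) {a b : ℝ}
    (ha : 0 ≤ a) (hb : 0 ≤ b) (h : g a ≤ g b) : a ≤ b := by
  rw [hg, hg] at h
  have := (Real.log_le_log_iff (by linarith : (0:ℝ) < 1 + a)
    (by linarith : (0:ℝ) < 1 + b)).mp (by linarith)
  linarith

lemma sum_Ico_block (f : ℕ → ℝ) (c : ℝ) (p q : ℕ) (hpq : p < q)
    (h : ∀ i, p ≤ i → i < q → f i = c) :
    ∑ i ∈ Ico p q, f i = ((q : ℝ) - (p : ℝ)) * c := by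
  rw [sum_congr rfl (fun i hi => h i (mem_Ico.1 hi).1 (mem_Ico.1 hi).2), sum_const,
    Nat.card_Ico, nsmul_eq_mul, Nat.cast_sub hpq.le]

lemma sum_blocks (f : ℕ → ℝ) (idx : ℕ → ℕ) (hidx0 : idx 0 = 0) (m : ℕ)
    (hmono : ∀ n < m, idx n ≤ idx (n + 1)) :
    ∑ i ∈ range (idx m), f i = ∑ n ∈ range m, ∑ i ∈ Ico (idx n) (idx (n + 1)), f i := by
  induction m with
  | zero => simp [hidx0]
  | succ m ih =>
    rw [sum_range_succ, ← ih (fun n hn => hmono n (Nat.lt_succ_of_lt hn))]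
    rw [range_eq_Ico, range_eq_Ico]
    exact (sum_Ico_consecutive f (Nat.zero_le _) (hmono m (Nat.lt_succ_self m))).symm

lemma exists_block (idx : ℕ → ℕ) (M N : ℕ) (hidx0 : idx 0 = 0) (hidxM : idx M = N)
    (i : ℕ) (hi : i < N) : ∃ n, n < M ∧ idx n ≤ i ∧ i < idx (n + 1) := by
  classical
  set n := Nat.findGreatest (fun n => idx n ≤ i) M with hn
  have hspec : idx n ≤ i := Nat.findGreatest_spec (P := fun n => idx n ≤ i) (Nat.zero_le M) (by simp [hidx0])
  have hle : n ≤ M := Nat.findGreatest_le M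
  have hnM : n < M := by
    rcases lt_or_eq_of_le hle with h | h
    · exact h
    · exfalso; rw [h] at hspec; omega
  refine ⟨n, hnM, hspec, ?_⟩
  by_contra h
  push_neg at h
  exact Nat.findGreatest_is_greatest (Nat.lt_succ_self n) hnM h

lemma block_vals (E : ℕ → ℝ) (g ginv : ℝ → ℝ)
    (hg : ∀ p, g p = Real.log (1 + p) / 2)
    (hginv : ∀ x, ginv x = Real.exp (2 * x) - 1)
    (r : ℕ → ℝ) (idx : ℕ → ℕ) (n : ℕ)
    (hlt : idx n < idx (n + 1))
    (hEmono : (∑ j ∈ range (idx n), E j) ≤ ∑ j ∈ range (idx (n + 1)), E j)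
    (hT : ∑ j ∈ range (idx n), ginv (r j) = ∑ j ∈ range (idx n), E j)
    (hb : ∀ i, idx n ≤ i → i < idx (n + 1) →
      r i = g (((∑ j ∈ range (idx (n + 1)), E j) -
              ∑ j ∈ range (idx n), ginv (r j)) /
            ((idx (n + 1) : ℝ) - (idx n : ℝ))))
    (i : ℕ) (hi1 : idx n ≤ i) (hi2 : i < idx (n + 1)) :
    r i = g (blkAvg E idx n) ∧ ginv (r i) = blkAvg E idx n := by
  have hcast : (idx n : ℝ) < (idx (n + 1) : ℝ) := by exact_mod_cast hlt
  have ha : 0 ≤ blkAvg E idx n := div_nonneg (by linarith) (by linarith)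
  have h1 : r i = g (blkAvg E idx n) := by rw [hb i hi1 hi2, hT]; rfl
  refine ⟨h1, ?_⟩
  rw [h1, hginv, hg]
  have h2 : 2 * (Real.log (1 + blkAvg E idx n) / 2) = Real.log (1 + blkAvg E idx n) := by ring
  rw [h2, Real.exp_log (by linarith)]
  ring

noncomputable def lamF (E : ℕ → ℝ) (idx : ℕ → ℕ) (M n : ℕ) : ℝ :=
  1 / (2 * (1 + blkAvg E idx (min n (M - 1))))

noncomputable def Dd (E : ℕ → ℝ) (ginv : ℝ → ℝ) (r' : ℕ → ℝ) (idx : ℕ → ℕ) (n : ℕ) : ℝ :=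
  (∑ i ∈ range (idx n), ginv (r' i)) - ∑ i ∈ range (idx n), E i

theorem stmt_13 (N : ℕ) (hN : 0 < N)
    (E : ℕ → ℝ) (hE : ∀ i, 0 ≤ E i)
    (g ginv : ℝ → ℝ)
    (hg : ∀ p, g p = Real.log (1 + p) / 2)
    (hginv : ∀ x, ginv x = Real.exp (2 * x) - 1)
    (r : ℕ → ℝ) (hr : ∀ i, 0 ≤ r i)
    (M : ℕ) (idx : ℕ → ℕ)
    (hidx0 : idx 0 = 0) (hidxM : idx M = N)
    (hidx_mono : ∀ n < M, idx n < idx (n + 1))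
    (hblock : ∀ n < M, ∀ i, idx n ≤ i → i < idx (n + 1) →
      r i = g (((∑ j ∈ range (idx (n + 1)), E j) -
              ∑ j ∈ range (idx n), ginv (r j)) /
            ((idx (n + 1) : ℝ) - (idx n : ℝ))))
    (hargmin : ∀ n < M, ∀ i, idx n < i → i ≤ N →
      g (((∑ j ∈ range (idx (n + 1)), E j) -
            ∑ j ∈ range (idx n), ginv (r j)) /
          ((idx (n + 1) : ℝ) - (idx n : ℝ))) ≤
      g (((∑ j ∈ range i, E j) -
            ∑ j ∈ range (idx n), ginv (r j)) /
          ((i : ℝ) - (idx n : ℝ)))) :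
    (∀ j < N, ∑ i ∈ range (j + 1), ginv (r i) ≤ ∑ i ∈ range (j + 1), E i) ∧
    (∀ r' : ℕ → ℝ,
      ((∀ i, 0 ≤ r' i) ∧
        (∀ j < N, ∑ i ∈ range (j + 1), ginv (r' i) ≤
          ∑ i ∈ range (j + 1), E i)) →
      ∑ i ∈ range N, r' i ≤ ∑ i ∈ range N, r i) ∧
    (∀ i j, i ≤ j → j < N → r i ≤ r j) := by
  -- basic facts
  have hM : 0 < M := by
    rcases Nat.eq_zero_or_pos M with h | h
    · exfalso; rw [h, hidx0] at hidxM; omega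
    · exact h
  have idx_lt : ∀ p q : ℕ, p < q → q ≤ M → idx p < idx q := by
    intro p q
    induction q with
    | zero => omega
    | succ q ih =>
      intro hpq hqM
      have hq : idx q < idx (q + 1) := hidx_mono q (by omega)
      rcases Nat.lt_succ_iff_lt_or_eq.mp hpq with h | h
      · exact lt_trans (ih h (by omega)) hq
      · subst h; exact hq
  have idx_le : ∀ p q : ℕ, p ≤ q → q ≤ M → idx p ≤ idx q := by
    intro p q hpq hqM
    rcases lt_or_eq_of_le hpq with h | h
    · exact (idx_lt p q h hqM).le
    · subst h; exact le_rfl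
  have hidxN : ∀ n, n ≤ M → idx n ≤ N := fun n h => hidxM ▸ idx_le n M h le_rfl
  have hSmono : ∀ p q : ℕ, p ≤ q → (∑ j ∈ range p, E j) ≤ ∑ j ∈ range q, E j := by
    intro p q h
    exact sum_le_sum_of_subset_of_nonneg (range_subset_range.2 h) (fun i _ _ => hE i)
  -- invariant: prefix sums match at block boundaries
  have hT : ∀ n, n ≤ M → ∑ j ∈ range (idx n), ginv (r j) = ∑ j ∈ range (idx n), E j := by
    intro n
    induction n with
    | zero => intro _; rw [hidx0]; simp
    | succ n ih =>
      intro hn1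
      have hn : n < M := by omega
      have ihn := ih (by omega)
      have hlt := hidx_mono n hn
      have hE2 := hSmono _ _ hlt.le
      have hIco : ∑ i ∈ Ico (idx n) (idx (n + 1)), ginv (r i)
          = (∑ j ∈ range (idx (n + 1)), E j) - ∑ j ∈ range (idx n), E j := by
        rw [sum_Ico_block (fun i => ginv (r i)) (blkAvg E idx n) _ _ hlt
          (fun i h1 h2 => (block_vals E g ginv hg hginv r idx n hlt hE2 ihn
            (hblock n hn) i h1 h2).2), blkAvg_mul E idx n hlt]
      have hsplit : ∑ j ∈ range (idx (n + 1)), ginv (r j)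
          = (∑ j ∈ range (idx n), ginv (r j)) + ∑ i ∈ Ico (idx n) (idx (n + 1)), ginv (r i) := by
        rw [range_eq_Ico, range_eq_Ico,
          sum_Ico_consecutive (fun i => ginv (r i)) (Nat.zero_le _) hlt.le]
      rw [hsplit, ihn, hIco]
      ring
  have hvals : ∀ n, n < M → ∀ i, idx n ≤ i → i < idx (n + 1) →
      r i = g (blkAvg E idx n) ∧ ginv (r i) = blkAvg E idx n := by
    intro n hn
    exact block_vals E g ginv hg hginv r idx n (hidx_mono n hn)
      (hSmono _ _ (hidx_mono n hn).le) (hT n hn.le) (hblock n hn)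
  have havg0 : ∀ n, n < M → 0 ≤ blkAvg E idx n := by
    intro n hn
    have hlt := hidx_mono n hn
    have hcast : (idx n : ℝ) < (idx (n + 1) : ℝ) := by exact_mod_cast hlt
    exact div_nonneg (by linarith [hSmono _ _ hlt.le]) (by linarith)
  -- feasibility
  have feas : ∀ j < N, ∑ i ∈ range (j + 1), ginv (r i) ≤ ∑ i ∈ range (j + 1), E i := by
    intro j hj
    obtain ⟨n, hn, h1, h2⟩ := exists_block idx M N hidx0 hidxM j hj
    have hlt := hidx_mono n hn
    have harg := hargmin n hn (j + 1) (by omega) (by omega)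
    rw [hT n hn.le] at harg
    have hcast : (idx n : ℝ) < ((j + 1 : ℕ) : ℝ) := by exact_mod_cast Nat.lt_succ_of_le h1
    have hb0 : 0 ≤ ((∑ i ∈ range (j + 1), E i) - ∑ i ∈ range (idx n), E i) /
        (((j + 1 : ℕ) : ℝ) - (idx n : ℝ)) :=
      div_nonneg (by linarith [hSmono (idx n) (j + 1) (by omega)]) (by linarith)
    have hab := g_le_g g hg (havg0 n hn) hb0 harg
    have hsplit : ∑ i ∈ range (j + 1), ginv (r i)
        = (∑ i ∈ range (idx n), ginv (r i)) + ∑ i ∈ Ico (idx n) (j + 1), ginv (r i) := by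
      rw [range_eq_Ico, range_eq_Ico,
        sum_Ico_consecutive (fun i => ginv (r i)) (Nat.zero_le _) (by omega)]
    have hIco : ∑ i ∈ Ico (idx n) (j + 1), ginv (r i)
        = (((j + 1 : ℕ) : ℝ) - (idx n : ℝ)) * blkAvg E idx n := by
      exact sum_Ico_block (fun i => ginv (r i)) (blkAvg E idx n) _ _ (by omega)
        (fun i hi1 hi2 => (hvals n hn i hi1 (by omega)).2)
    have hmul : (((j + 1 : ℕ) : ℝ) - (idx n : ℝ)) * blkAvg E idx n
        ≤ (∑ i ∈ range (j + 1), E i) - ∑ i ∈ range (idx n), E i := by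
      have := mul_le_mul_of_nonneg_left hab (by linarith : (0:ℝ) ≤ ((j + 1 : ℕ) : ℝ) - (idx n : ℝ))
      rwa [mul_comm _ (_ / _), div_mul_cancel₀ _ (by linarith : ((j + 1 : ℕ) : ℝ) - (idx n : ℝ) ≠ 0)] at this
    rw [hsplit, hT n hn.le, hIco]
    linarith
  -- monotonicity of block averages
  have hstep : ∀ n, n + 1 < M → blkAvg E idx n ≤ blkAvg E idx (n + 1) := by
    intro n h
    have hn : n < M := by omega
    have hlt1 := hidx_mono n hn
    have hlt2 : idx (n + 1) < idx (n + 2) := hidx_mono (n + 1) h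
    have harg := hargmin n hn (idx (n + 2)) (lt_trans hlt1 hlt2) (hidxN (n + 2) (by omega))
    rw [hT n hn.le] at harg
    have hc1 : (idx n : ℝ) < (idx (n + 1) : ℝ) := by exact_mod_cast hlt1
    have hc2 : (idx (n + 1) : ℝ) < (idx (n + 2) : ℝ) := by exact_mod_cast hlt2
    have hw0 : 0 ≤ ((∑ j ∈ range (idx (n + 2)), E j) - ∑ j ∈ range (idx n), E j) /
        ((idx (n + 2) : ℝ) - (idx n : ℝ)) :=
      div_nonneg (by linarith [hSmono (idx n) (idx (n + 2)) (by omega)]) (by linarith)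
    have hab := g_le_g g hg (havg0 n hn) hw0 harg
    have e1 := blkAvg_mul E idx n hlt1
    have e2 := blkAvg_mul E idx (n + 1) hlt2
    have hmul : ((idx (n + 2) : ℝ) - (idx n : ℝ)) * blkAvg E idx n
        ≤ (∑ j ∈ range (idx (n + 2)), E j) - ∑ j ∈ range (idx n), E j := by
      have := mul_le_mul_of_nonneg_left hab (by linarith : (0:ℝ) ≤ (idx (n + 2) : ℝ) - (idx n : ℝ))
      rwa [mul_comm _ (_ / _), div_mul_cancel₀ _ (by linarith : (idx (n + 2) : ℝ) - (idx n : ℝ) ≠ 0)] at this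
    have key : ((idx (n + 2) : ℝ) - (idx (n + 1) : ℝ)) * blkAvg E idx n
        ≤ ((idx (n + 2) : ℝ) - (idx (n + 1) : ℝ)) * blkAvg E idx (n + 1) := by
      nlinarith [hmul, e1, e2]
    exact le_of_mul_le_mul_left (by linarith [key]) (by linarith : (0:ℝ) < (idx (n + 2) : ℝ) - (idx (n + 1) : ℝ))
  have hmono_blocks : ∀ k m, m + k < M → blkAvg E idx m ≤ blkAvg E idx (m + k) := by
    intro k
    induction k with
    | zero => intro m _; simp
    | succ k ih =>
      intro m h
      calc blkAvg E idx m ≤ blkAvg E idx (m + k) := ih m (by omega)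
        _ ≤ blkAvg E idx (m + k + 1) := hstep (m + k) (by omega)
  have hmono' : ∀ m n, m ≤ n → n < M → blkAvg E idx m ≤ blkAvg E idx n := by
    intro m n hmn hn
    have := hmono_blocks (n - m) m (by omega)
    rwa [show m + (n - m) = n from by omega] at this
  refine ⟨feas, ?_, ?_⟩
  · -- optimality
    rintro r' ⟨hr'0, hr'f⟩
    have hp'0 : ∀ i, 0 ≤ ginv (r' i) := by
      intro i
      rw [hginv]
      have : (1:ℝ) ≤ Real.exp (2 * r' i) := Real.one_le_exp (by linarith [hr'0 i])
      linarith
    have hr'g : ∀ i, r' i = Real.log (1 + ginv (r' i)) / 2 := by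
      intro i
      rw [hginv]
      have h1 : 1 + (Real.exp (2 * r' i) - 1) = Real.exp (2 * r' i) := by ring
      rw [h1, Real.log_exp]; ring
    have hD0 : Dd E ginv r' idx 0 = 0 := by simp [Dd, hidx0]
    have hDle : ∀ n, 1 ≤ n → n ≤ M → Dd E ginv r' idx n ≤ 0 := by
      intro n h1 hn
      have h2 : 0 < idx n := by
        have := idx_lt 0 n (by omega) hn
        omega
      have h3 : idx n ≤ N := hidxN n hn
      have h4 := hr'f (idx n - 1) (by omega)
      rw [show idx n - 1 + 1 = idx n from by omega] at h4
      simp only [Dd]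
      linarith
    have lam0 : ∀ n, 0 ≤ lamF E idx M n := by
      intro n
      have := havg0 (min n (M - 1)) (by omega)
      rw [lamF]
      apply div_nonneg (by norm_num)
      linarith
    have lam_anti : ∀ n, lamF E idx M (n + 1) ≤ lamF E idx M n := by
      intro n
      have h1 := havg0 (min n (M - 1)) (by omega)
      have h2 : blkAvg E idx (min n (M - 1)) ≤ blkAvg E idx (min (n + 1) (M - 1)) :=
        hmono' _ _ (by omega) (by omega)
      rw [lamF, lamF]
      exact one_div_le_one_div_of_le (by linarith) (by linarith)
    have habel : ∀ m, m ≤ M →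
        ∑ n ∈ range m, lamF E idx M n * (Dd E ginv r' idx (n + 1) - Dd E ginv r' idx n)
          ≤ lamF E idx M m * Dd E ginv r' idx m := by
      intro m
      induction m with
      | zero => intro _; rw [sum_range_zero, hD0, mul_zero]
      | succ m ih =>
        intro h
        have ihm := ih (by omega)
        rw [sum_range_succ]
        have hd := hDle (m + 1) (by omega) h
        have hl := lam_anti m
        have key : (lamF E idx M m - lamF E idx M (m + 1)) * Dd E ginv r' idx (m + 1) ≤ 0 :=
          mul_nonpos_of_nonneg_of_nonpos (by linarith) hd
        nlinarith [ihm, key]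
    have hsplitN : ∀ f : ℕ → ℝ,
        ∑ i ∈ range N, f i = ∑ n ∈ range M, ∑ i ∈ Ico (idx n) (idx (n + 1)), f i := by
      intro f
      rw [← hidxM]
      exact sum_blocks f idx hidx0 M (fun n hn => (hidx_mono n hn).le)
    have hDdiff : ∀ n, n < M → Dd E ginv r' idx (n + 1) - Dd E ginv r' idx n
        = ∑ i ∈ Ico (idx n) (idx (n + 1)), (ginv (r' i) - ginv (r i)) := by
      intro n hn
      have hlt := hidx_mono n hn
      have h1 : ∑ i ∈ range (idx (n + 1)), ginv (r' i)
          = (∑ i ∈ range (idx n), ginv (r' i)) + ∑ i ∈ Ico (idx n) (idx (n + 1)), ginv (r' i) := by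
        rw [range_eq_Ico, range_eq_Ico,
          sum_Ico_consecutive (fun i => ginv (r' i)) (Nat.zero_le _) hlt.le]
      have h2 : ∑ i ∈ Ico (idx n) (idx (n + 1)), ginv (r i)
          = (∑ j ∈ range (idx (n + 1)), E j) - ∑ j ∈ range (idx n), E j := by
        rw [sum_Ico_block (fun i => ginv (r i)) (blkAvg E idx n) _ _ hlt
          (fun i hi1 hi2 => (hvals n hn i hi1 hi2).2), blkAvg_mul E idx n hlt]
      rw [sum_sub_distrib, h2]
      simp only [Dd]
      linarith [h1]
    have hblockbound : ∀ n, n < M → ∑ i ∈ Ico (idx n) (idx (n + 1)), r' i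
        ≤ (∑ i ∈ Ico (idx n) (idx (n + 1)), r i)
          + lamF E idx M n * (Dd E ginv r' idx (n + 1) - Dd E ginv r' idx n) := by
      intro n hn
      rw [hDdiff n hn, mul_sum, ← sum_add_distrib]
      apply sum_le_sum
      intro i hi
      obtain ⟨hi1, hi2⟩ := mem_Ico.mp hi
      obtain ⟨hval1, hval2⟩ := hvals n hn i hi1 hi2
      have ha := havg0 n hn
      have hp := hp'0 i
      have hmin : min n (M - 1) = n := by omega
      have hlog := log_concave_aux ha hp
      have hlam : lamF E idx M n = 1 / (2 * (1 + blkAvg E idx n)) := by rw [lamF, hmin]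
      rw [hval2, hval1, hg, hlam]
      have hne : (1 + blkAvg E idx n) ≠ 0 := by linarith
      have expand : Real.log (1 + blkAvg E idx n) / 2
            + 1 / (2 * (1 + blkAvg E idx n)) * (ginv (r' i) - blkAvg E idx n)
          = (Real.log (1 + blkAvg E idx n)
            + (ginv (r' i) - blkAvg E idx n) / (1 + blkAvg E idx n)) / 2 := by
        field_simp
      rw [expand]
      linarith [hr'g i, hlog]
    calc ∑ i ∈ range N, r' i
        = ∑ n ∈ range M, ∑ i ∈ Ico (idx n) (idx (n + 1)), r' i := hsplitN r'
      _ ≤ ∑ n ∈ range M, ((∑ i ∈ Ico (idx n) (idx (n + 1)), r i)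
            + lamF E idx M n * (Dd E ginv r' idx (n + 1) - Dd E ginv r' idx n)) :=
          sum_le_sum (fun n hn => hblockbound n (mem_range.mp hn))
      _ = (∑ n ∈ range M, ∑ i ∈ Ico (idx n) (idx (n + 1)), r i)
            + ∑ n ∈ range M, lamF E idx M n * (Dd E ginv r' idx (n + 1) - Dd E ginv r' idx n) :=
          sum_add_distrib
      _ ≤ ∑ i ∈ range N, r i := by
          rw [← hsplitN r]
          have h1 := habel M le_rfl
          have h2 := lam0 M
          have h3 := hDle M (by omega) le_rfl
          nlinarith [mul_nonpos_of_nonneg_of_nonpos h2 h3]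
  · -- monotonicity of rates
    intro i j hij hj
    obtain ⟨m, hm, hm1, hm2⟩ := exists_block idx M N hidx0 hidxM i (lt_of_le_of_lt hij hj)
    obtain ⟨n, hn, hn1, hn2⟩ := exists_block idx M N hidx0 hidxM j hj
    have hmn : m ≤ n := by
      by_contra h
      push_neg at h
      have := idx_le (n + 1) m (by omega) hm.le
      omega
    rw [(hvals m hm i hm1 hm2).1, (hvals n hn j hn1 hn2).1, hg, hg]
    have h0 := havg0 m hm
    have h1 := hmono' m n hmn hn
    have := (Real.log_le_log_iff (by linarith : (0:ℝ) < 1 + blkAvg E idx m)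
      (by linarith : (0:ℝ) < 1 + blkAvg E idx n)).mpr (by linarith)
    linarith
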